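/- Under the GSVD setup, assume additionally that σ_1 > σ_2 > … > σ_r (distinct generalized singular values) and that u_{A,i}ᵀ L_M b ≠ 0 for all 1 ≤ i ≤ r. Fix 1 ≤ k ≤ r. Let D ∈ ℝ^{r×r} be the diagonal matrix with entries σ_i · (u_{A,i}ᵀ L_M b), partitioned as D = diag(D_1, D_2) with D_1 ∈ ℝ^{k×k}; let H_k ∈ ℝ^{r×k} have entries (H_k)_{ij} = σ_i^{2(j−1)}, partitioned into its top k rows H_{k1} ∈ ℝ^{k×k} and bottom r−k rows H_{k2} ∈ ℝ^{(r−k)×k}; and let Δ_k = D_2 H_{k2} H_{k1}^{-1} D_1^{-1} ∈ ℝ^{(r−k)×k}. Then, with S_k = span{Z_r D_A^{2i+1} U_{A,r}ᵀ L_M b : 0 ≤ i ≤ k−1} (the k-th gen-GKB solution subspace) and Z_k = span{z_1,…,z_k}, it holds that dist(S_k, Z_k) = ‖Δ_k‖_2 / (1 + ‖Δ_k‖_2²)^{1/2}. -/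

import Mathlib

open Matrix

/-- The spectral (operator 2-) norm of a real matrix. -/
noncomputable def matSpectralNorm {p q : ℕ} (A : Matrix (Fin p) (Fin q) ℝ) : ℝ :=
  ‖LinearMap.toContinuousLinearMap (Matrix.toEuclideanLin A)‖

/-- The maximum canonical angle `Θ(F,G)` between two subspaces of `ℝⁿ` equipped with the
`W`-inner product `⟨x, x'⟩_W = xᵀ W x'` (here `W` plays the role of `N⁻¹`). -/
noncomputable def maxCanonicalAngle {n : ℕ} (W : Matrix (Fin n) (Fin n) ℝ)
    (F G : Submodule ℝ (Fin n → ℝ)) : ℝ :=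
  ⨆ u : {u : Fin n → ℝ // u ∈ F ∧ u ≠ 0},
    ⨅ v : {v : Fin n → ℝ // v ∈ G ∧ v ≠ 0},
      Real.arccos (|u.1 ⬝ᵥ (W *ᵥ v.1)| /
        (Real.sqrt (u.1 ⬝ᵥ (W *ᵥ u.1)) * Real.sqrt (v.1 ⬝ᵥ (W *ᵥ v.1))))

/-- The distance `dist(F,G) = sin Θ(F,G)` between two subspaces. -/
noncomputable def subspaceDist {n : ℕ} (W : Matrix (Fin n) (Fin n) ℝ)
    (F G : Submodule ℝ (Fin n → ℝ)) : ℝ :=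
  Real.sin (maxCanonicalAngle W F G)


lemma norm_symm_equiv {q : ℕ} (x : Fin q → ℝ) :
    ‖(WithLp.equiv 2 (Fin q → ℝ)).symm x‖ = Real.sqrt (x ⬝ᵥ x) := by
  rw [EuclideanSpace.norm_eq]
  congr 1
  simp [dotProduct, Real.norm_eq_abs, sq_abs, sq]

lemma matSpectralNorm_nonneg {p q : ℕ} (A : Matrix (Fin p) (Fin q) ℝ) : 0 ≤ matSpectralNorm A :=
  norm_nonneg _

lemma matSpectralNorm_mulVec_le {p q : ℕ} (A : Matrix (Fin p) (Fin q) ℝ) (x : Fin q → ℝ) :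
    Real.sqrt ((A *ᵥ x) ⬝ᵥ (A *ᵥ x)) ≤ matSpectralNorm A * Real.sqrt (x ⬝ᵥ x) := by
  have h := ContinuousLinearMap.le_opNorm
    (LinearMap.toContinuousLinearMap (Matrix.toEuclideanLin A))
    ((WithLp.equiv 2 (Fin q → ℝ)).symm x)
  have happ : (LinearMap.toContinuousLinearMap (Matrix.toEuclideanLin A))
      ((WithLp.equiv 2 (Fin q → ℝ)).symm x)
      = (WithLp.equiv 2 (Fin p → ℝ)).symm (A *ᵥ x) := by
    simp [Matrix.toEuclideanLin_apply]
  rw [happ, norm_symm_equiv, norm_symm_equiv] at h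
  exact h

lemma dotProduct_abs_le {q : ℕ} (x y : Fin q → ℝ) :
    |x ⬝ᵥ y| ≤ Real.sqrt (x ⬝ᵥ x) * Real.sqrt (y ⬝ᵥ y) := by
  have h := abs_real_inner_le_norm
    ((WithLp.equiv 2 (Fin q → ℝ)).symm x) ((WithLp.equiv 2 (Fin q → ℝ)).symm y)
  have hinner : (inner ℝ ((WithLp.equiv 2 (Fin q → ℝ)).symm x)
      ((WithLp.equiv 2 (Fin q → ℝ)).symm y) : ℝ) = x ⬝ᵥ y := by
    rw [PiLp.inner_apply]
    simp [dotProduct, mul_comm]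
  rw [hinner, norm_symm_equiv, norm_symm_equiv] at h
  exact h

lemma arccos_anti {x y : ℝ} (h : x ≤ y) : Real.arccos y ≤ Real.arccos x := by
  rw [Real.arccos_eq_pi_div_two_sub_arcsin, Real.arccos_eq_pi_div_two_sub_arcsin]
  have := Real.monotone_arcsin h
  linarith

lemma matSpectralNorm_exists {p q : ℕ} (hq : 0 < q) (A : Matrix (Fin p) (Fin q) ℝ) :
    ∃ x : Fin q → ℝ, x ⬝ᵥ x = 1 ∧
      Real.sqrt ((A *ᵥ x) ⬝ᵥ (A *ᵥ x)) = matSpectralNorm A := by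
  set T := LinearMap.toContinuousLinearMap (Matrix.toEuclideanLin A) with hT
  have hsph : (EuclideanSpace.single (⟨0, hq⟩ : Fin q) (1:ℝ)) ∈
      Metric.sphere (0 : EuclideanSpace ℝ (Fin q)) 1 := by
    simp [EuclideanSpace.norm_single]
  obtain ⟨x₀, hx₀mem, hx₀max⟩ := (isCompact_sphere (0 : EuclideanSpace ℝ (Fin q)) 1).exists_isMaxOn
    ⟨_, hsph⟩ ((T.continuous.norm).continuousOn)
  have hx₀ : ‖x₀‖ = 1 := by simpa using hx₀mem
  have hTnorm : ‖T‖ = ‖T x₀‖ := by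
    apply le_antisymm
    · apply ContinuousLinearMap.opNorm_le_bound _ (norm_nonneg _)
      intro y
      by_cases hy : y = 0
      · simp [hy]
      · have hny : ‖y‖ ≠ 0 := norm_ne_zero_iff.mpr hy
        have hz : (‖y‖⁻¹ • y) ∈ Metric.sphere (0 : EuclideanSpace ℝ (Fin q)) 1 := by
          simp [norm_smul, abs_of_nonneg (inv_nonneg.mpr (norm_nonneg y)),
            inv_mul_cancel₀ hny]
        have hle : ‖T (‖y‖⁻¹ • y)‖ ≤ ‖T x₀‖ := hx₀max hz
        rw [T.map_smul, norm_smul] at hle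
        simp only [norm_inv, norm_norm] at hle
        calc ‖T y‖ = ‖y‖ * (‖y‖⁻¹ * ‖T y‖) := by field_simp
        _ ≤ ‖y‖ * ‖T x₀‖ := by
            apply mul_le_mul_of_nonneg_left _ (norm_nonneg _)
            linarith
        _ = ‖T x₀‖ * ‖y‖ := mul_comm _ _
    · have := T.le_opNorm x₀
      rw [hx₀] at this
      linarith
  refine ⟨(WithLp.equiv 2 (Fin q → ℝ)) x₀, ?_, ?_⟩
  · have h1 : Real.sqrt (((WithLp.equiv 2 (Fin q → ℝ)) x₀) ⬝ᵥ ((WithLp.equiv 2 (Fin q → ℝ)) x₀)) = 1 := by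
      rw [← norm_symm_equiv]
      simpa using hx₀
    have hnn : (0:ℝ) ≤ ((WithLp.equiv 2 (Fin q → ℝ)) x₀) ⬝ᵥ ((WithLp.equiv 2 (Fin q → ℝ)) x₀) :=
      Finset.sum_nonneg fun i _ => mul_self_nonneg _
    calc ((WithLp.equiv 2 (Fin q → ℝ)) x₀) ⬝ᵥ ((WithLp.equiv 2 (Fin q → ℝ)) x₀)
        = (Real.sqrt (((WithLp.equiv 2 (Fin q → ℝ)) x₀) ⬝ᵥ ((WithLp.equiv 2 (Fin q → ℝ)) x₀)))^2 := by
          rw [Real.sq_sqrt hnn]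
      _ = 1 := by rw [h1]; norm_num
  · have happ : T x₀ = (WithLp.equiv 2 (Fin p → ℝ)).symm (A *ᵥ (WithLp.equiv 2 (Fin q → ℝ)) x₀) := by
      simp [hT, Matrix.toEuclideanLin_apply]
    rw [matSpectralNorm, ← hT, hTnorm, happ, norm_symm_equiv]


def emb1 (n k : ℕ) : Matrix (Fin n) (Fin k) ℝ :=
  Matrix.of fun j i => if (j : ℕ) = (i : ℕ) then 1 else 0

def emb2 (n r k : ℕ) : Matrix (Fin n) (Fin (r - k)) ℝ :=
  Matrix.of fun j i => if (j : ℕ) = k + (i : ℕ) then 1 else 0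

lemma emb1_mulVec {n k : ℕ} (hkn : k ≤ n) (x : Fin k → ℝ) (j : Fin n) :
    (emb1 n k *ᵥ x) j = if h : (j : ℕ) < k then x ⟨j, h⟩ else 0 := by
  unfold emb1
  rw [mulVec]
  by_cases h : (j : ℕ) < k
  · rw [dif_pos h, dotProduct, Finset.sum_eq_single (⟨(j:ℕ), h⟩ : Fin k)]
    · simp
    · intro b _ hb
      simp only [of_apply]
      rw [if_neg, zero_mul]
      intro hc
      exact hb (by apply Fin.ext; exact hc.symm)
    · intro hb; exact absurd (Finset.mem_univ _) hb
  · rw [dif_neg h]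
    apply Finset.sum_eq_zero
    intro i _
    simp only [of_apply]
    rw [if_neg, zero_mul]
    intro hc
    omega

lemma emb2_mulVec {n r k : ℕ} (hrn : r ≤ n) (x : Fin (r - k) → ℝ) (j : Fin n) :
    (emb2 n r k *ᵥ x) j =
      if h : k ≤ (j : ℕ) ∧ (j : ℕ) < r then x ⟨(j : ℕ) - k, by omega⟩ else 0 := by
  unfold emb2
  rw [mulVec]
  by_cases h : k ≤ (j : ℕ) ∧ (j : ℕ) < r
  · have hlt : (j : ℕ) - k < r - k := by omega
    rw [dif_pos h, dotProduct, Finset.sum_eq_single (⟨(j:ℕ) - k, hlt⟩ : Fin (r-k))]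
    · simp only [of_apply, ]
      rw [if_pos (by show (j:ℕ) = k + ((j:ℕ) - k); omega), one_mul]
    · intro b _ hb
      simp only [of_apply]
      rw [if_neg, zero_mul]
      intro hc
      apply hb
      apply Fin.ext
      show (b:ℕ) = (j:ℕ) - k
      omega
    · intro hb; exact absurd (Finset.mem_univ _) hb
  · rw [dif_neg h]
    apply Finset.sum_eq_zero
    intro i _
    simp only [of_apply]
    rw [if_neg, zero_mul]
    have := i.isLt
    omega

lemma emb1_t_emb1 {n k : ℕ} (hkn : k ≤ n) : (emb1 n k)ᵀ * emb1 n k = 1 := by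
  ext i i'
  rw [Matrix.mul_apply, Finset.sum_eq_single (Fin.castLE hkn i)]
  · simp only [transpose_apply, emb1, of_apply, Fin.coe_castLE]
    simp [Matrix.one_apply, Fin.ext_iff]
  · intro b _ hb
    simp only [transpose_apply, emb1, of_apply]
    rw [if_neg, zero_mul]
    intro hc
    exact hb (by apply Fin.ext; simp [hc])
  · intro hb; exact absurd (Finset.mem_univ _) hb

lemma emb2_t_emb2 {n r k : ℕ} (hrn : r ≤ n) : (emb2 n r k)ᵀ * emb2 n r k = 1 := by
  ext i i'
  have hlt : k + (i : ℕ) < n := by have := i.isLt; omega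
  rw [Matrix.mul_apply, Finset.sum_eq_single (⟨k + (i:ℕ), hlt⟩ : Fin n)]
  · simp only [transpose_apply, emb2, of_apply]
    rw [if_pos trivial, one_mul, Matrix.one_apply]
    by_cases h : i = i'
    · rw [if_pos h, if_pos (by rw [h])]
    · rw [if_neg h, if_neg (fun hc => h (by apply Fin.ext; omega))]
  · intro b _ hb
    simp only [transpose_apply, emb2, of_apply]
    rw [if_neg, zero_mul]
    intro hc
    apply hb
    apply Fin.ext
    show (b:ℕ) = k + (i:ℕ)
    exact hc
  · intro hb; exact absurd (Finset.mem_univ _) hb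

lemma emb1_t_emb2 {n r k : ℕ} : (emb1 n k)ᵀ * emb2 n r k = 0 := by
  ext i i'
  rw [Matrix.mul_apply]
  rw [show (0 : Matrix (Fin k) (Fin (r-k)) ℝ) i i' = 0 from rfl]
  apply Finset.sum_eq_zero
  intro j _
  simp only [transpose_apply, emb1, emb2, of_apply]
  by_cases h : (j:ℕ) = (i:ℕ)
  · rw [if_pos h, one_mul, if_neg]
    have := i.isLt
    omega
  · rw [if_neg h, zero_mul]

lemma emb_split {n r k : ℕ} (hkr : k ≤ r) (hrn : r ≤ n) (ρ : Fin r → ℝ) :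
    emb1 n r *ᵥ ρ = emb1 n k *ᵥ (fun i => ρ (Fin.castLE hkr i))
      + emb2 n r k *ᵥ (fun i : Fin (r-k) => ρ ⟨k + (i:ℕ), by have := i.isLt; omega⟩) := by
  funext j
  rw [Pi.add_apply, emb1_mulVec hrn, emb1_mulVec (hkr.trans hrn), emb2_mulVec hrn]
  by_cases h1 : (j : ℕ) < k
  · rw [dif_pos (by omega : (j:ℕ) < r), dif_pos h1, dif_neg (by omega), add_zero]
    congr 1
  · by_cases h2 : (j : ℕ) < r
    · rw [dif_pos h2, dif_neg h1, dif_pos (by omega : k ≤ (j:ℕ) ∧ (j:ℕ) < r), zero_add]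
      congr 1
      apply Fin.ext
      show (j:ℕ) = k + ((j:ℕ) - k)
      omega
    · rw [dif_neg h2, dif_neg h1, dif_neg (by omega), add_zero]

lemma mul_emb1_apply {n k : ℕ} (hkn : k ≤ n) (Z : Matrix (Fin n) (Fin n) ℝ)
    (a : Fin n) (i : Fin k) : (Z * emb1 n k) a i = Z a (Fin.castLE hkn i) := by
  rw [Matrix.mul_apply, Finset.sum_eq_single (Fin.castLE hkn i)]
  · simp [emb1]
  · intro b _ hb
    simp only [emb1, of_apply]
    rw [if_neg, mul_zero]
    intro hc
    exact hb (by apply Fin.ext; simp [hc])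
  · intro hb; exact absurd (Finset.mem_univ _) hb

section Aux

lemma mv_dot {a b : ℕ} (B : Matrix (Fin a) (Fin b) ℝ) (u : Fin b → ℝ) (w : Fin a → ℝ) :
    (B *ᵥ u) ⬝ᵥ w = u ⬝ᵥ (Bᵀ *ᵥ w) := by
  rw [dotProduct_comm, dotProduct_mulVec, ← mulVec_transpose]
  exact dotProduct_comm _ _

lemma dot_nonneg' {a : ℕ} (z : Fin a → ℝ) : 0 ≤ z ⬝ᵥ z :=
  Finset.sum_nonneg fun i _ => mul_self_nonneg _

lemma dot_pos' {a : ℕ} (z : Fin a → ℝ) (hz : z ≠ 0) : 0 < z ⬝ᵥ z := by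
  rcases lt_or_eq_of_le (dot_nonneg' z) with h | h
  · exact h
  · exact absurd (dotProduct_self_eq_zero.mp h.symm) hz

end Aux


set_option maxHeartbeats 1600000 in
/-- Under the GSVD setup with distinct generalized singular values and
nonvanishing Fourier coefficients, the distance between the `k`-th gen-GKB solution
subspace `S_k` and `Z_k = span{z_1,…,z_k}` equals `‖Δ_k‖₂ / (1 + ‖Δ_k‖₂²)^{1/2}`. -/
theorem dist_solution_subspace {m n : ℕ} (r k : ℕ)
    (hk1 : 1 ≤ k) (hkr : k ≤ r) (hrm : r ≤ m) (hrn : r ≤ n)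
    (A : Matrix (Fin m) (Fin n) ℝ) (b : Fin m → ℝ)
    (M : Matrix (Fin m) (Fin m) ℝ) (N : Matrix (Fin n) (Fin n) ℝ)
    (hM : M.PosDef) (hN : N.PosDef)
    (LM : Matrix (Fin m) (Fin m) ℝ) (LN : Matrix (Fin n) (Fin n) ℝ)
    (hLM : IsUnit LM.det) (hLN : IsUnit LN.det)
    (hLMM : LMᵀ * LM = M⁻¹) (hLNN : LNᵀ * LN = N⁻¹)
    (UA : Matrix (Fin m) (Fin m) ℝ) (hUA : UAᵀ * UA = 1)
    (Z : Matrix (Fin n) (Fin n) ℝ) (hZ : IsUnit Z.det) (hZN : Zᵀ * N⁻¹ * Z = 1)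
    (σ : ℕ → ℝ)
    (hσpos : ∀ i, i < r → 0 < σ i) (hσlt1 : ∀ i, i < r → σ i < 1)
    (hσdistinct : ∀ i j, i < j → j < r → σ j < σ i)
    (SigA : Matrix (Fin m) (Fin n) ℝ)
    (hSigA : ∀ (i : Fin m) (j : Fin n),
      SigA i j = if (i : ℕ) = (j : ℕ) ∧ (i : ℕ) < r then σ (i : ℕ) else 0)
    (hgsvd : LM * A = UA * SigA * Z⁻¹)
    -- Fourier coefficients c_i = u_{A,i}ᵀ L_M b, assumed nonzero for 1 ≤ i ≤ r
    (c : ℕ → ℝ)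
    (hc : ∀ i : Fin r, c (i : ℕ) = UAᵀ (Fin.castLE hrm i) ⬝ᵥ (LM *ᵥ b))
    (hcne : ∀ i, i < r → c i ≠ 0)
    -- the partitioned diagonal matrix D = diag(σ_i c_i) and Vandermonde-type blocks
    (D₁ : Matrix (Fin k) (Fin k) ℝ)
    (hD₁ : D₁ = Matrix.diagonal fun i : Fin k => σ (i : ℕ) * c (i : ℕ))
    (D₂ : Matrix (Fin (r - k)) (Fin (r - k)) ℝ)
    (hD₂ : D₂ = Matrix.diagonal fun i : Fin (r - k) => σ (k + (i : ℕ)) * c (k + (i : ℕ)))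
    (H₁ : Matrix (Fin k) (Fin k) ℝ)
    (hH₁ : H₁ = Matrix.of fun i j : Fin k => σ (i : ℕ) ^ (2 * (j : ℕ)))
    (H₂ : Matrix (Fin (r - k)) (Fin k) ℝ)
    (hH₂ : H₂ = Matrix.of fun (i : Fin (r - k)) (j : Fin k) => σ (k + (i : ℕ)) ^ (2 * (j : ℕ)))
    (Δk : Matrix (Fin (r - k)) (Fin k) ℝ)
    (hΔk : Δk = D₂ * H₂ * H₁⁻¹ * D₁⁻¹)
    -- the first r columns of Z and U_A, and D_A = diag(σ_1,…,σ_r)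
    (Zr : Matrix (Fin n) (Fin r) ℝ) (hZr : Zr = Z.submatrix id (Fin.castLE hrn))
    (UAr : Matrix (Fin m) (Fin r) ℝ) (hUAr : UAr = UA.submatrix id (Fin.castLE hrm))
    (DA : Matrix (Fin r) (Fin r) ℝ)
    (hDA : DA = Matrix.diagonal fun i : Fin r => σ (i : ℕ))
    -- the k-th gen-GKB solution subspace S_k and the ideal subspace Z_k
    (Sk : Submodule ℝ (Fin n → ℝ))
    (hSk : Sk = Submodule.span ℝ {w : Fin n → ℝ | ∃ i, i < k ∧
      w = (Zr * DA ^ (2 * i + 1) * UArᵀ * LM) *ᵥ b})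
    (Zk : Submodule ℝ (Fin n → ℝ))
    (hZk : Zk = Submodule.span ℝ
      (Set.range fun i : Fin k => Zᵀ (Fin.castLE (hkr.trans hrn) i))) :
    subspaceDist N⁻¹ Sk Zk =
      matSpectralNorm Δk / Real.sqrt (1 + matSpectralNorm Δk ^ 2) := by
  classical
  obtain ⟨t, ht⟩ : ∃ t', t' = matSpectralNorm Δk := ⟨_, rfl⟩
  rw [← ht]
  have ht0 : 0 ≤ t := ht ▸ matSpectralNorm_nonneg Δk
  -- isometry
  have hiso : ∀ p q : Fin n → ℝ, (Z *ᵥ p) ⬝ᵥ (N⁻¹ *ᵥ (Z *ᵥ q)) = p ⬝ᵥ q := by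
    intro p q
    rw [mv_dot, mulVec_mulVec, mulVec_mulVec, hZN, one_mulVec]
  -- dot products of embedded vectors
  have hKa : ∀ (p p' : Fin k → ℝ) (q q' : Fin (r - k) → ℝ),
      (emb1 n k *ᵥ p + emb2 n r k *ᵥ q) ⬝ᵥ (emb1 n k *ᵥ p' + emb2 n r k *ᵥ q')
        = p ⬝ᵥ p' + q ⬝ᵥ q' := by
    intro p p' q q'
    have h21 : (emb2 n r k)ᵀ * emb1 n k = 0 := by
      have := congrArg Matrix.transpose (emb1_t_emb2 (n := n) (r := r) (k := k))
      rwa [Matrix.transpose_mul, Matrix.transpose_transpose, Matrix.transpose_zero] at this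
    have t11 : ∀ u w : Fin k → ℝ, (emb1 n k *ᵥ u) ⬝ᵥ (emb1 n k *ᵥ w) = u ⬝ᵥ w := by
      intro u w
      rw [mv_dot, mulVec_mulVec, emb1_t_emb1 (hkr.trans hrn), one_mulVec]
    have t12 : ∀ (u : Fin k → ℝ) (w : Fin (r - k) → ℝ),
        (emb1 n k *ᵥ u) ⬝ᵥ (emb2 n r k *ᵥ w) = 0 := by
      intro u w
      rw [mv_dot, mulVec_mulVec, emb1_t_emb2, zero_mulVec, dotProduct_zero]
    have t21 : ∀ (u : Fin (r - k) → ℝ) (w : Fin k → ℝ),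
        (emb2 n r k *ᵥ u) ⬝ᵥ (emb1 n k *ᵥ w) = 0 := by
      intro u w
      rw [mv_dot, mulVec_mulVec, h21, zero_mulVec, dotProduct_zero]
    have t22 : ∀ u w : Fin (r - k) → ℝ, (emb2 n r k *ᵥ u) ⬝ᵥ (emb2 n r k *ᵥ w) = u ⬝ᵥ w := by
      intro u w
      rw [mv_dot, mulVec_mulVec, emb2_t_emb2 hrn, one_mulVec]
    rw [add_dotProduct, dotProduct_add, dotProduct_add, t11, t12, t21, t22]
    ring
  -- inner products of model vectors
  have hΦΦ : ∀ x x' : Fin k → ℝ,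
      (Z *ᵥ (emb1 n k *ᵥ x + emb2 n r k *ᵥ (Δk *ᵥ x))) ⬝ᵥ
        (N⁻¹ *ᵥ (Z *ᵥ (emb1 n k *ᵥ x' + emb2 n r k *ᵥ (Δk *ᵥ x'))))
        = x ⬝ᵥ x' + (Δk *ᵥ x) ⬝ᵥ (Δk *ᵥ x') := by
    intro x x'
    rw [hiso, hKa]
  have hΦΨ : ∀ (x y : Fin k → ℝ),
      (Z *ᵥ (emb1 n k *ᵥ x + emb2 n r k *ᵥ (Δk *ᵥ x))) ⬝ᵥ
        (N⁻¹ *ᵥ (Z *ᵥ (emb1 n k *ᵥ y))) = x ⬝ᵥ y := by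
    intro x y
    have h := hKa x y (Δk *ᵥ x) 0
    simp only [mulVec_zero, add_zero, dotProduct_zero] at h
    rw [hiso]
    exact h
  have hΨΨ : ∀ (y y' : Fin k → ℝ),
      (Z *ᵥ (emb1 n k *ᵥ y)) ⬝ᵥ (N⁻¹ *ᵥ (Z *ᵥ (emb1 n k *ᵥ y'))) = y ⬝ᵥ y' := by
    intro y y'
    have h := hKa y y' 0 0
    simp only [mulVec_zero, add_zero, dotProduct_zero] at h
    rw [hiso]
    exact h
  -- nonvanishing
  have hΦzero : ∀ x : Fin k → ℝ,
      Z *ᵥ (emb1 n k *ᵥ x + emb2 n r k *ᵥ (Δk *ᵥ x)) = 0 → x = 0 := by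
    intro x hx
    have h := hΦΦ x x
    rw [hx] at h
    simp only [zero_dotProduct] at h
    have h1 : x ⬝ᵥ x = 0 := by
      have := dot_nonneg' x
      have := dot_nonneg' (Δk *ᵥ x)
      linarith
    exact dotProduct_self_eq_zero.mp h1
  have hΨzero : ∀ y : Fin k → ℝ, Z *ᵥ (emb1 n k *ᵥ y) = 0 → y = 0 := by
    intro y hy
    have h := hΨΨ y y
    rw [hy] at h
    simp only [zero_dotProduct] at h
    exact dotProduct_self_eq_zero.mp h.symm
  -- invertibility of H₁, D₁
  have hdetH₁ : IsUnit H₁.det := by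
    have hvdm : H₁ = Matrix.vandermonde (fun i : Fin k => σ (i : ℕ) ^ 2) := by
      rw [hH₁]; ext i j; simp [Matrix.vandermonde, pow_mul]
    rw [hvdm, Matrix.det_vandermonde, isUnit_iff_ne_zero]
    rw [Finset.prod_ne_zero_iff]
    intro i _
    rw [Finset.prod_ne_zero_iff]
    intro j hj
    have hij' : i < j := Finset.mem_Ioi.mp hj
    have hij : (i : ℕ) < (j : ℕ) := hij'
    have hjr : (j : ℕ) < r := lt_of_lt_of_le j.isLt hkr
    have h1 := hσdistinct (i : ℕ) (j : ℕ) hij hjr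
    have h2 := hσpos (j : ℕ) hjr
    have h3 := hσpos (i : ℕ) (by omega)
    have : σ (j : ℕ) ^ 2 < σ (i : ℕ) ^ 2 := by nlinarith
    intro hc'
    rw [sub_eq_zero] at hc'
    linarith [hc'.symm.le]
  have hdetD₁ : IsUnit D₁.det := by
    rw [hD₁, Matrix.det_diagonal, isUnit_iff_ne_zero, Finset.prod_ne_zero_iff]
    intro i _
    have hir : (i : ℕ) < r := lt_of_lt_of_le i.isLt hkr
    exact mul_ne_zero (ne_of_gt (hσpos _ hir)) (hcne _ hir)
  have hdetDH : IsUnit (D₁ * H₁).det := by rw [Matrix.det_mul]; exact hdetD₁.mul hdetH₁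
  have hΔDH : Δk * (D₁ * H₁) = D₂ * H₂ := by
    rw [hΔk, Matrix.mul_assoc (D₂ * H₂ * H₁⁻¹) D₁⁻¹ (D₁ * H₁),
      ← Matrix.mul_assoc D₁⁻¹ D₁ H₁, Matrix.nonsing_inv_mul _ hdetD₁, Matrix.one_mul,
      Matrix.mul_assoc (D₂ * H₂) H₁⁻¹ H₁, Matrix.nonsing_inv_mul _ hdetH₁, Matrix.mul_one]
  -- the generating vectors of Sk
  have hsum : ∀ a : Fin k → ℝ,
      (∑ i : Fin k, a i • ((Zr * DA ^ (2 * (i : ℕ) + 1) * UArᵀ * LM) *ᵥ b))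
        = Z *ᵥ (emb1 n k *ᵥ ((D₁ * H₁) *ᵥ a)
            + emb2 n r k *ᵥ (Δk *ᵥ ((D₁ * H₁) *ᵥ a))) := by
    have hZrK : Zr = Z * emb1 n r := by
      rw [hZr]
      ext a' i
      rw [mul_emb1_apply hrn]
      simp [Matrix.submatrix_apply]
    have hUvec : UArᵀ *ᵥ (LM *ᵥ b) = fun j : Fin r => c (j : ℕ) := by
      funext j
      rw [hc j, hUAr]
      simp [Matrix.mulVec, dotProduct, Matrix.submatrix_apply, Matrix.transpose_apply]
    have hDAv : ∀ (e : ℕ) (v : Fin r → ℝ),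
        DA ^ e *ᵥ v = fun j : Fin r => σ (j : ℕ) ^ e * v j := by
      intro e v
      rw [hDA, Matrix.diagonal_pow]
      funext j
      rw [mulVec_diagonal]
      simp
    have hs : ∀ i : Fin k, (Zr * DA ^ (2 * (i : ℕ) + 1) * UArᵀ * LM) *ᵥ b
        = Z *ᵥ (emb1 n r *ᵥ (fun j : Fin r => σ (j : ℕ) ^ (2 * (i : ℕ) + 1) * c (j : ℕ))) := by
      intro i
      have h1 : Z *ᵥ (emb1 n r *ᵥ (DA ^ (2 * (i : ℕ) + 1) *ᵥ (UArᵀ *ᵥ (LM *ᵥ b))))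
          = (Zr * DA ^ (2 * (i : ℕ) + 1) * UArᵀ * LM) *ᵥ b := by
        rw [hZrK, mulVec_mulVec, mulVec_mulVec, mulVec_mulVec, mulVec_mulVec]
      rw [← h1, hUvec, hDAv]
    intro a
    have hlin : (∑ i : Fin k, a i • ((Zr * DA ^ (2 * (i : ℕ) + 1) * UArᵀ * LM) *ᵥ b))
        = Z *ᵥ (emb1 n r *ᵥ (fun j : Fin r =>
            ∑ i : Fin k, a i * (σ (j : ℕ) ^ (2 * (i : ℕ) + 1) * c (j : ℕ)))) := by
      simp only [hs]
      have hL : ∀ g : Fin r → ℝ, Z *ᵥ (emb1 n r *ᵥ g)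
          = Matrix.mulVecLin (Z * emb1 n r) g := by
        intro g
        rw [Matrix.mulVecLin_apply, ← mulVec_mulVec]
      simp only [hL]
      simp only [← LinearMap.map_smul]
      rw [← map_sum]
      congr 1
      funext j
      simp [Finset.sum_apply]
    rw [hlin]
    have hsplit := emb_split hkr hrn (fun j : Fin r =>
      ∑ i : Fin k, a i * (σ (j : ℕ) ^ (2 * (i : ℕ) + 1) * c (j : ℕ)))
    have htop' : (fun i : Fin k => ∑ l : Fin k,
        a l * (σ ((Fin.castLE hkr i : Fin r) : ℕ) ^ (2 * (l : ℕ) + 1) * c ((Fin.castLE hkr i : Fin r) : ℕ)))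
        = (D₁ * H₁) *ᵥ a := by
      funext i
      rw [← mulVec_mulVec, hD₁, mulVec_diagonal, hH₁]
      rw [show (Matrix.of fun i j : Fin k => σ (i : ℕ) ^ (2 * (j : ℕ)) : Matrix (Fin k) (Fin k) ℝ) *ᵥ a
        = fun i : Fin k => ∑ l : Fin k, σ (i : ℕ) ^ (2 * (l : ℕ)) * a l from rfl]
      simp only [Fin.coe_castLE, Finset.mul_sum]
      apply Finset.sum_congr rfl
      intro l _
      rw [pow_succ]
      ring
    have hbot' : (fun i : Fin (r - k) => ∑ l : Fin k,
        a l * (σ (((⟨k + (i : ℕ), by have := i.isLt; omega⟩ : Fin r)) : ℕ) ^ (2 * (l : ℕ) + 1)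
          * c (((⟨k + (i : ℕ), by have := i.isLt; omega⟩ : Fin r)) : ℕ)))
        = Δk *ᵥ ((D₁ * H₁) *ᵥ a) := by
      rw [mulVec_mulVec, hΔDH, ← mulVec_mulVec]
      funext i
      rw [hD₂, mulVec_diagonal, hH₂]
      rw [show (Matrix.of fun (i : Fin (r-k)) (j : Fin k) => σ (k + (i : ℕ)) ^ (2 * (j : ℕ))
          : Matrix (Fin (r-k)) (Fin k) ℝ) *ᵥ a
        = fun i : Fin (r-k) => ∑ l : Fin k, σ (k + (i : ℕ)) ^ (2 * (l : ℕ)) * a l from rfl]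
      simp only [Finset.mul_sum]
      apply Finset.sum_congr rfl
      intro l _
      rw [pow_succ]
      ring
    rw [hsplit, htop', hbot']
  -- membership characterizations
  have hSmem : ∀ u, u ∈ Sk ↔ ∃ x : Fin k → ℝ,
      u = Z *ᵥ (emb1 n k *ᵥ x + emb2 n r k *ᵥ (Δk *ᵥ x)) := by
    intro u
    rw [hSk]
    have hset : {w : Fin n → ℝ | ∃ i, i < k ∧ w = (Zr * DA ^ (2 * i + 1) * UArᵀ * LM) *ᵥ b}
        = Set.range (fun i : Fin k => (Zr * DA ^ (2 * (i : ℕ) + 1) * UArᵀ * LM) *ᵥ b) := by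
      ext w
      constructor
      · rintro ⟨i, hik, rfl⟩; exact ⟨⟨i, hik⟩, rfl⟩
      · rintro ⟨i, rfl⟩; exact ⟨(i : ℕ), i.isLt, rfl⟩
    rw [hset, Submodule.mem_span_range_iff_exists_fun ℝ]
    constructor
    · rintro ⟨a, rfl⟩
      exact ⟨(D₁ * H₁) *ᵥ a, hsum a⟩
    · rintro ⟨x, rfl⟩
      refine ⟨(D₁ * H₁)⁻¹ *ᵥ x, ?_⟩
      rw [hsum, mulVec_mulVec x (D₁ * H₁) (D₁ * H₁)⁻¹,
        Matrix.mul_nonsing_inv _ hdetDH, one_mulVec]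
  have hZmem : ∀ v, v ∈ Zk ↔ ∃ y : Fin k → ℝ, v = Z *ᵥ (emb1 n k *ᵥ y) := by
    intro v
    rw [hZk, Submodule.mem_span_range_iff_exists_fun ℝ]
    have hcol : ∀ y : Fin k → ℝ,
        ∑ i : Fin k, y i • Zᵀ (Fin.castLE (hkr.trans hrn) i) = Z *ᵥ (emb1 n k *ᵥ y) := by
      intro y
      funext j
      rw [mulVec_mulVec, Finset.sum_apply]
      rw [show ((Z * emb1 n k) *ᵥ y) j = ∑ i : Fin k, (Z * emb1 n k) j i * y i from rfl]
      apply Finset.sum_congr rfl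
      intro i _
      rw [mul_emb1_apply (hkr.trans hrn)]
      simp [Matrix.transpose_apply, mul_comm]
    constructor
    · rintro ⟨y, h⟩; exact ⟨y, by rw [← h, hcol]⟩
    · rintro ⟨y, rfl⟩; exact ⟨y, hcol y⟩
  -- spectral norm facts
  obtain ⟨x₀, hx₀1, hx₀A⟩ := matSpectralNorm_exists (by omega : 0 < k) Δk
  rw [← ht] at hx₀A
  have hx₀sq : (Δk *ᵥ x₀) ⬝ᵥ (Δk *ᵥ x₀) = t ^ 2 := by
    rw [← hx₀A, Real.sq_sqrt (dot_nonneg' _)]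
  have hx₀ne : x₀ ≠ 0 := by
    intro h
    rw [h] at hx₀1
    simp at hx₀1
  have h1t : (0 : ℝ) < 1 + t ^ 2 := by positivity
  have hst : (0 : ℝ) < Real.sqrt (1 + t ^ 2) := Real.sqrt_pos.mpr h1t
  -- the key ratio inequality
  have hratio : ∀ x : Fin k → ℝ, x ≠ 0 →
      1 / Real.sqrt (1 + t ^ 2) ≤
        Real.sqrt (x ⬝ᵥ x) / Real.sqrt (x ⬝ᵥ x + (Δk *ᵥ x) ⬝ᵥ (Δk *ᵥ x)) := by
    intro x hx
    have hX : 0 < x ⬝ᵥ x := dot_pos' x hx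
    have hD : 0 ≤ (Δk *ᵥ x) ⬝ᵥ (Δk *ᵥ x) := dot_nonneg' _
    have hDle : (Δk *ᵥ x) ⬝ᵥ (Δk *ᵥ x) ≤ t ^ 2 * (x ⬝ᵥ x) := by
      have h := matSpectralNorm_mulVec_le Δk x
      rw [← ht] at h
      have h2 : (Real.sqrt ((Δk *ᵥ x) ⬝ᵥ (Δk *ᵥ x))) ^ 2 ≤ (t * Real.sqrt (x ⬝ᵥ x)) ^ 2 := by
        apply pow_le_pow_left₀ (Real.sqrt_nonneg _) h
      rw [Real.sq_sqrt hD, mul_pow, Real.sq_sqrt hX.le] at h2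
      exact h2
    rw [div_le_div_iff₀ hst (Real.sqrt_pos.mpr (by linarith)), one_mul]
    calc Real.sqrt (x ⬝ᵥ x + (Δk *ᵥ x) ⬝ᵥ (Δk *ᵥ x))
        ≤ Real.sqrt ((x ⬝ᵥ x) * (1 + t ^ 2)) := Real.sqrt_le_sqrt (by nlinarith)
      _ = Real.sqrt (x ⬝ᵥ x) * Real.sqrt (1 + t ^ 2) := Real.sqrt_mul hX.le _
  -- distinguished elements
  have hu₀S : Z *ᵥ (emb1 n k *ᵥ x₀ + emb2 n r k *ᵥ (Δk *ᵥ x₀)) ∈ Sk :=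
    (hSmem _).2 ⟨x₀, rfl⟩
  have hu₀ne : Z *ᵥ (emb1 n k *ᵥ x₀ + emb2 n r k *ᵥ (Δk *ᵥ x₀)) ≠ 0 :=
    fun h => hx₀ne (hΦzero _ h)
  have hv₀Z : Z *ᵥ (emb1 n k *ᵥ x₀) ∈ Zk := (hZmem _).2 ⟨x₀, rfl⟩
  have hv₀ne : Z *ᵥ (emb1 n k *ᵥ x₀) ≠ 0 := fun h => hx₀ne (hΨzero _ h)
  haveI hne1 : Nonempty {u : Fin n → ℝ // u ∈ Sk ∧ u ≠ 0} := ⟨⟨_, hu₀S, hu₀ne⟩⟩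
  haveI hne2 : Nonempty {v : Fin n → ℝ // v ∈ Zk ∧ v ≠ 0} := ⟨⟨_, hv₀Z, hv₀ne⟩⟩
  -- bddBelow of the inner families
  have hbddB : ∀ u : {u : Fin n → ℝ // u ∈ Sk ∧ u ≠ 0},
      BddBelow (Set.range fun v : {v : Fin n → ℝ // v ∈ Zk ∧ v ≠ 0} =>
        Real.arccos (|u.1 ⬝ᵥ (N⁻¹ *ᵥ v.1)| /
          (Real.sqrt (u.1 ⬝ᵥ (N⁻¹ *ᵥ u.1)) * Real.sqrt (v.1 ⬝ᵥ (N⁻¹ *ᵥ v.1))))) := by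
    intro u
    refine ⟨0, ?_⟩
    rintro θ ⟨v, rfl⟩
    exact Real.arccos_nonneg _
  have hSupEq : maxCanonicalAngle N⁻¹ Sk Zk
      = Real.arccos (1 / Real.sqrt (1 + t ^ 2)) := by
    unfold maxCanonicalAngle
    apply le_antisymm
    · apply ciSup_le
      intro u
      obtain ⟨hus, hune⟩ := u.2
      obtain ⟨x, hxu⟩ := (hSmem u.1).1 hus
      have hx0 : x ≠ 0 := by
        intro h
        apply hune
        rw [hxu, h]
        simp
      have hv₁Z : Z *ᵥ (emb1 n k *ᵥ x) ∈ Zk := (hZmem _).2 ⟨x, rfl⟩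
      have hv₁ne : Z *ᵥ (emb1 n k *ᵥ x) ≠ 0 := fun h => hx0 (hΨzero _ h)
      refine le_trans (ciInf_le (hbddB u) ⟨_, hv₁Z, hv₁ne⟩) ?_
      have hX : 0 < x ⬝ᵥ x := dot_pos' x hx0
      have hD : 0 ≤ (Δk *ᵥ x) ⬝ᵥ (Δk *ᵥ x) := dot_nonneg' _
      rw [hxu, hΦΨ, hΦΦ, hΨΨ]
      apply arccos_anti
      have heq : |x ⬝ᵥ x| / (Real.sqrt (x ⬝ᵥ x + (Δk *ᵥ x) ⬝ᵥ (Δk *ᵥ x)) * Real.sqrt (x ⬝ᵥ x))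
          = Real.sqrt (x ⬝ᵥ x) / Real.sqrt (x ⬝ᵥ x + (Δk *ᵥ x) ⬝ᵥ (Δk *ᵥ x)) := by
        have hsX : 0 < Real.sqrt (x ⬝ᵥ x) := Real.sqrt_pos.mpr hX
        have hsS : 0 < Real.sqrt (x ⬝ᵥ x + (Δk *ᵥ x) ⬝ᵥ (Δk *ᵥ x)) :=
          Real.sqrt_pos.mpr (by linarith)
        have hmm := Real.mul_self_sqrt hX.le
        rw [abs_of_nonneg hX.le, div_eq_div_iff (by positivity) hsS.ne']
        linear_combination (-(Real.sqrt (x ⬝ᵥ x + (Δk *ᵥ x) ⬝ᵥ (Δk *ᵥ x)))) * hmm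
      rw [heq]
      exact hratio x hx0
    · have hbddA : BddAbove (Set.range fun u : {u : Fin n → ℝ // u ∈ Sk ∧ u ≠ 0} =>
          ⨅ v : {v : Fin n → ℝ // v ∈ Zk ∧ v ≠ 0},
            Real.arccos (|u.1 ⬝ᵥ (N⁻¹ *ᵥ v.1)| /
              (Real.sqrt (u.1 ⬝ᵥ (N⁻¹ *ᵥ u.1)) * Real.sqrt (v.1 ⬝ᵥ (N⁻¹ *ᵥ v.1))))) := by
        refine ⟨Real.pi, ?_⟩
        rintro θ ⟨u, rfl⟩
        exact le_trans (ciInf_le (hbddB u) ⟨_, hv₀Z, hv₀ne⟩) (Real.arccos_le_pi _)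
      refine le_trans ?_ (le_ciSup hbddA ⟨_, hu₀S, hu₀ne⟩)
      apply le_ciInf
      intro v
      obtain ⟨hvz, hvne⟩ := v.2
      obtain ⟨y, hyv⟩ := (hZmem v.1).1 hvz
      have hy0 : y ≠ 0 := by
        intro h
        apply hvne
        rw [hyv, h]
        simp
      have hY : 0 < y ⬝ᵥ y := dot_pos' y hy0
      have hsY : 0 < Real.sqrt (y ⬝ᵥ y) := Real.sqrt_pos.mpr hY
      rw [hyv, hΦΨ, hΦΦ, hΨΨ, hx₀1, hx₀sq]
      apply arccos_anti
      have hCS : |x₀ ⬝ᵥ y| ≤ Real.sqrt (y ⬝ᵥ y) := by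
        have h := dotProduct_abs_le x₀ y
        rw [hx₀1, Real.sqrt_one, one_mul] at h
        exact h
      calc |x₀ ⬝ᵥ y| / (Real.sqrt (1 + t ^ 2) * Real.sqrt (y ⬝ᵥ y))
          ≤ Real.sqrt (y ⬝ᵥ y) / (Real.sqrt (1 + t ^ 2) * Real.sqrt (y ⬝ᵥ y)) := by
            gcongr
        _ = 1 / Real.sqrt (1 + t ^ 2) := by
            rw [mul_comm, ← div_div, div_self (ne_of_gt hsY)]
  show Real.sin (maxCanonicalAngle N⁻¹ Sk Zk) = t / Real.sqrt (1 + t ^ 2)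
  rw [hSupEq, Real.sin_arccos]
  rw [div_pow, one_pow, Real.sq_sqrt h1t.le]
  rw [show (1 : ℝ) - 1 / (1 + t ^ 2) = t ^ 2 / (1 + t ^ 2) by field_simp; ring]
  rw [Real.sqrt_div' _ h1t.le, Real.sqrt_sq ht0]
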